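/- If a = ∑_{j ≤ m} a_j ℏ^{-j} is a nonzero element of the ring k (satisfying the factorial growth condition |a_j| ≤ C ε^{-j}(-j)! for j < 0), then its multiplicative inverse in ℂ[[ℏ]][ℏ^{-1}] also satisfies a factorial growth condition of the same type; hence k is a field. -/

import Mathlib

open Nat

/-- The Gevrey-type growth condition defining the subfield `k` of `ℂ[[ℏ,ℏ^{-1}]`. -/
def inGevreyClass (a : LaurentSeries ℂ) : Prop :=
  ∃ C > (0 : ℝ), ∃ ε > (0 : ℝ), ∀ j : ℤ, j < 0 →
    ‖a.coeff (-j)‖ ≤ C * ε ^ (-j) * ((-j).toNat !)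

open Finset PowerSeries

lemma myFactBound (n e : ℕ) : ((n + e)! : ℝ) ≤ 2 ^ (n + e) * n ! * e ! := by
  have h1 : (n + e).choose e * n ! * e ! = (n + e)! :=
    Nat.add_choose_mul_factorial_mul_factorial n e
  have h2 : (n + e).choose e ≤ 2 ^ (n + e) := by
    calc (n + e).choose e ≤ ∑ i ∈ Finset.range (n + e + 1), (n + e).choose i :=
          Finset.single_le_sum (f := fun i => (n + e).choose i)
            (fun _ _ => Nat.zero_le _) (by simp [Nat.lt_succ_iff])
      _ = 2 ^ (n + e) := Nat.sum_range_choose (n + e)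
  have h3 : (n + e)! ≤ 2 ^ (n + e) * n ! * e ! := by
    rw [← h1]; gcongr
  exact_mod_cast h3


lemma myGeomBound (t : ℝ) (h0 : 0 ≤ t) (h1 : t < 1) (m : ℕ) :
    ∑ i ∈ range m, t ^ i ≤ (1 - t)⁻¹ := by
  have hpos : 0 < 1 - t := by linarith
  have hgs : (∑ i ∈ range m, t ^ i) * (1 - t) = 1 - t ^ m := by
    linear_combination -(geom_sum_mul t m)
  rw [inv_eq_one_div, le_div_iff₀ hpos, hgs]
  have : 0 ≤ t ^ m := pow_nonneg h0 m
  linarith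

lemma myFacMul {k n : ℕ} (hk : k ≤ n) : ((k ! : ℝ) * ((n - k)! : ℝ)) ≤ (n ! : ℝ) := by
  exact_mod_cast Nat.le_of_dvd n.factorial_pos (Nat.factorial_mul_factorial_dvd_factorial hk)

lemma inv_gevrey (p : PowerSeries ℂ) (hp0 : constantCoeff p ≠ 0)
    (r M E : ℝ) (hr : r = (‖constantCoeff p‖)⁻¹)
    (hM : 0 < M) (hE : 1 ≤ E)
    (hb : ∀ n : ℕ, ‖coeff n p‖ ≤ M * E ^ n * n !) :
    ∀ n : ℕ, ‖coeff n p⁻¹‖ ≤ r * (E * (1 + 2 * r * M)) ^ n * n ! := by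
  have hrpos : 0 < r := by
    rw [hr]; exact inv_pos.mpr (norm_pos_iff.mpr hp0)
  set s : ℝ := 2 * r * M with hs
  have hspos : 0 < s := by positivity
  set F : ℝ := E * (1 + s) with hF
  have hEpos : 0 < E := lt_of_lt_of_le one_pos hE
  have hFpos : 0 < F := by positivity
  set t : ℝ := (1 + s)⁻¹ with ht
  have ht0 : 0 ≤ t := by positivity
  have ht1 : t < 1 := by
    rw [ht]; rw [inv_lt_one_iff₀]; right; linarith
  have hFt : F * t = E := by
    rw [hF, ht]; field_simp
  intro n
  induction n using Nat.strong_induction_on with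
  | _ n ih =>
  rcases Nat.eq_zero_or_pos n with h0 | hn
  · subst h0
    rw [coeff_zero_eq_constantCoeff_apply, PowerSeries.constantCoeff_inv, norm_inv]
    simp [hr]
  · rw [PowerSeries.coeff_inv, if_neg (Nat.pos_iff_ne_zero.mp hn), norm_mul]
    have habs : ‖-(constantCoeff p)⁻¹‖ = r := by
      rw [norm_neg, norm_inv, hr]
    rw [habs]
    have hS : ‖∑ x ∈ antidiagonal n,
          if x.2 < n then (coeff x.1 p) * (coeff x.2 p⁻¹) else 0‖
        ≤ (1 / 2) * (F ^ n * n !) := by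
      calc ‖∑ x ∈ antidiagonal n,
              if x.2 < n then (coeff x.1 p) * (coeff x.2 p⁻¹) else 0‖
          ≤ ∑ x ∈ antidiagonal n,
              ‖if x.2 < n then (coeff x.1 p) * (coeff x.2 p⁻¹) else 0‖ :=
            norm_sum_le _ _
        _ = ∑ k ∈ range (n + 1),
              ‖if n - k < n then (coeff k p) * (coeff (n - k) p⁻¹) else 0‖ :=
            Nat.sum_antidiagonal_eq_sum_range_succ
              (fun i j => ‖if j < n then (coeff i p) * (coeff j p⁻¹) else 0‖) n
        _ ≤ ∑ k ∈ range (n + 1), (if 0 < k then (M * r * F ^ n * n !) * t ^ k else 0) := by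
            apply Finset.sum_le_sum
            intro k hk
            rw [Finset.mem_range, Nat.lt_succ_iff] at hk
            by_cases hk0 : 0 < k
            · have hlt : n - k < n := Nat.sub_lt hn hk0
              rw [if_pos hlt, if_pos hk0, norm_mul]
              have hpow : E ^ k * F ^ (n - k) = F ^ n * t ^ k := by
                have hn' : n - k + k = n := Nat.sub_add_cancel hk
                calc E ^ k * F ^ (n - k) = (F * t) ^ k * F ^ (n - k) := by rw [hFt]
                  _ = F ^ (n - k) * F ^ k * t ^ k := by rw [mul_pow]; ring
                  _ = F ^ n * t ^ k := by rw [← pow_add, hn']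
              calc ‖coeff k p‖ * ‖coeff (n - k) p⁻¹‖
                  ≤ (M * E ^ k * k !) * (r * F ^ (n - k) * (n - k)!) := by
                    apply mul_le_mul (hb k) (ih (n - k) hlt) (norm_nonneg _)
                    positivity
                _ = M * r * (E ^ k * F ^ (n - k)) * ((k ! : ℝ) * ((n - k)! : ℝ)) := by ring
                _ ≤ M * r * (E ^ k * F ^ (n - k)) * (n ! : ℝ) := by
                    apply mul_le_mul_of_nonneg_left (myFacMul hk)
                    positivity
                _ = (M * r * F ^ n * n !) * t ^ k := by rw [hpow]; ring
            · have hk' : k = 0 := by omega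
              subst hk'
              simp
        _ = (M * r * F ^ n * n !) * ∑ k ∈ range (n + 1), (if 0 < k then t ^ k else 0) := by
            rw [Finset.mul_sum]
            exact Finset.sum_congr rfl fun k _ => by split <;> ring
        _ ≤ (M * r * F ^ n * n !) * (t * (1 - t)⁻¹) := by
            apply mul_le_mul_of_nonneg_left _ (by positivity)
            rw [Finset.sum_range_succ' (fun k => if 0 < k then t ^ k else 0) n]
            have heq : (∑ i ∈ range n, (if 0 < i + 1 then t ^ (i + 1) else 0))
                + (if (0:ℕ) < 0 then t ^ 0 else 0) = t * ∑ i ∈ range n, t ^ i := by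
              rw [if_neg (lt_irrefl 0), add_zero, Finset.mul_sum]
              exact Finset.sum_congr rfl fun i _ => by rw [if_pos (Nat.succ_pos i)]; ring
            rw [heq]
            exact mul_le_mul_of_nonneg_left (myGeomBound t ht0 ht1 n) ht0
        _ = (1 / 2) * (F ^ n * n !) := by
            have h1t : 1 - t = s * t := by
              rw [ht]; field_simp; ring
            rw [h1t, mul_inv, ht]
            have : (1 + s) ≠ 0 := by positivity
            field_simp [hs]
            ring
    calc r * ‖_‖ ≤ r * ((1 / 2) * (F ^ n * n !)) :=
          mul_le_mul_of_nonneg_left hS hrpos.le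
      _ ≤ r * F ^ n * n ! := by
          have h1 : (0:ℝ) ≤ F ^ n * n ! := by positivity
          nlinarith

/-- The inverse of a nonzero element of `k` again lies in `k`; hence `k` is a field. -/
theorem stmt_5 (a : LaurentSeries ℂ) (ha : inGevreyClass a) (h0 : a ≠ 0) :
    inGevreyClass a⁻¹ := by
  obtain ⟨C, hC, ε, hε, hcoef⟩ := ha
  set d : ℤ := a.order with hd
  set p : PowerSeries ℂ := a.powerSeriesPart with hp
  have hp0 : constantCoeff p ≠ 0 := by
    rw [← coeff_zero_eq_constantCoeff_apply, hp, LaurentSeries.powerSeriesPart_coeff]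
    simpa using HahnSeries.coeff_order_eq_zero.not.mpr h0
  -- bounds on coefficients of p
  set e : ℕ := d.toNat with he
  set e₂ : ℕ := (-d).toNat with he₂
  set ε' : ℝ := max ε 1 with hε'
  have hε'1 : 1 ≤ ε' := le_max_right ε 1
  set B : ℝ := ∑ i ∈ range (e₂ + 1), ‖coeff i p‖ with hB
  have hB0 : 0 ≤ B := Finset.sum_nonneg fun i _ => norm_nonneg _
  set M : ℝ := C * ε' ^ e * 2 ^ e * e ! + B + 1 with hM'
  have hA0 : 0 ≤ C * ε' ^ e * 2 ^ e * (e ! : ℝ) := by positivity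
  have hM : 0 < M := by rw [hM']; linarith
  set E : ℝ := 2 * ε' with hE'
  have hE : 1 ≤ E := by rw [hE']; linarith
  have hone : ∀ n : ℕ, (1:ℝ) ≤ E ^ n * n ! := by
    intro n
    have h1 : (1:ℝ) ≤ E ^ n := one_le_pow₀ hE
    have h2 : (1:ℝ) ≤ (n ! : ℝ) := by exact_mod_cast n.factorial_pos
    nlinarith
  have hb : ∀ n : ℕ, ‖coeff n p‖ ≤ M * E ^ n * n ! := by
    intro n
    have hcn : coeff n p = a.coeff (d + n) := by
      rw [hp, LaurentSeries.powerSeriesPart_coeff]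
    by_cases hdn : 0 < d + (n : ℤ)
    · have hj := hcoef (-(d + n)) (by omega)
      rw [neg_neg] at hj
      rw [hcn]
      set mt : ℕ := (d + (n : ℤ)).toNat with hmt
      have hmz : (d + (n : ℤ)) = (mt : ℤ) := by omega
      have hmle : mt ≤ n + e := by omega
      have hεmt : ε ^ (d + (n : ℤ)) ≤ ε' ^ mt := by
        rw [hmz, zpow_natCast]
        exact pow_le_pow_left₀ hε.le (le_max_left ε 1) mt
      have hε'le : ε' ^ mt ≤ ε' ^ (n + e) := pow_le_pow_right₀ hε'1 hmle
      have hfle : ((mt ! : ℕ) : ℝ) ≤ ((n + e)! : ℝ) := by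
        exact_mod_cast Nat.factorial_le hmle
      calc ‖a.coeff (d + n)‖ ≤ C * ε ^ (d + (n : ℤ)) * (mt !) := hj
        _ ≤ C * ε' ^ (n + e) * ((n + e)! : ℝ) := by
            apply mul_le_mul (by
              apply mul_le_mul_of_nonneg_left _ hC.le
              exact le_trans hεmt hε'le) hfle (by positivity) (by positivity)
        _ ≤ C * ε' ^ (n + e) * (2 ^ (n + e) * n ! * e !) := by
            apply mul_le_mul_of_nonneg_left (myFactBound n e) (by positivity)
        _ = (C * ε' ^ e * 2 ^ e * e !) * (E ^ n * n !) := by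
            rw [pow_add, pow_add, hE', mul_pow]; ring
        _ ≤ M * E ^ n * n ! := by
            have h1 : (0:ℝ) ≤ E ^ n * (n ! : ℝ) := by positivity
            have h2 : C * ε' ^ e * 2 ^ e * (e ! : ℝ) ≤ M := by rw [hM']; linarith
            calc (C * ε' ^ e * 2 ^ e * e !) * (E ^ n * n !) ≤ M * (E ^ n * n !) :=
                  mul_le_mul_of_nonneg_right h2 h1
              _ = M * E ^ n * n ! := by ring
    · have hne : n ≤ e₂ := by omega
      have h1 : ‖coeff n p‖ ≤ B := by
        rw [hB]
        exact Finset.single_le_sum (f := fun i => ‖coeff i p‖)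
          (fun i _ => norm_nonneg _) (by simp [Nat.lt_succ_iff]; omega)
      have h2 : B ≤ M := by rw [hM']; linarith
      calc ‖coeff n p‖ ≤ M := le_trans h1 h2
        _ ≤ M * (E ^ n * n !) := le_mul_of_one_le_right hM.le (hone n)
        _ = M * E ^ n * n ! := by ring
  -- inverse of a
  set r : ℝ := (‖constantCoeff p‖)⁻¹ with hr
  have hrpos : 0 < r := inv_pos.mpr (norm_pos_iff.mpr hp0)
  set F : ℝ := E * (1 + 2 * r * M) with hF
  have hF1 : 1 ≤ F := by
    have : 0 < 2 * r * M := by positivity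
    nlinarith
  have hq : ∀ n : ℕ, ‖coeff n p⁻¹‖ ≤ r * F ^ n * n ! :=
    inv_gevrey p hp0 r M E hr hM hE hb
  have hainv : a⁻¹ = (HahnSeries.single (-d) 1 : LaurentSeries ℂ) *
      (HahnSeries.ofPowerSeries ℤ ℂ p⁻¹) := by
    apply inv_eq_of_mul_eq_one_right
    conv_lhs => rw [← a.single_order_mul_powerSeriesPart]
    rw [← hd, ← hp]
    calc (HahnSeries.single d 1 * (HahnSeries.ofPowerSeries ℤ ℂ p)) *
          (HahnSeries.single (-d) 1 * HahnSeries.ofPowerSeries ℤ ℂ p⁻¹)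
        = (HahnSeries.single d (1:ℂ) * HahnSeries.single (-d) 1) *
          ((HahnSeries.ofPowerSeries ℤ ℂ p) * HahnSeries.ofPowerSeries ℤ ℂ p⁻¹) := by ring
      _ = 1 := by
          rw [HahnSeries.single_mul_single, ← map_mul, PowerSeries.mul_inv_cancel p hp0]
          simp
  have hcoeffinv : ∀ m : ℤ, a⁻¹.coeff m =
      (HahnSeries.ofPowerSeries ℤ ℂ p⁻¹).coeff (m + d) := by
    intro m
    rw [hainv]
    have h := HahnSeries.coeff_single_mul_add (r := (1:ℂ))
      (x := HahnSeries.ofPowerSeries ℤ ℂ p⁻¹) (a := m + d) (b := -d)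
    rw [add_neg_cancel_right] at h
    rw [h, one_mul]
  -- final bounds
  clear_value ε' B M E r F
  refine ⟨r * (2 * F) ^ e * e !, by positivity, 2 * F, by positivity, ?_⟩
  intro j hj
  set m : ℤ := -j with hm
  have hm0 : 0 < m := by omega
  rw [hcoeffinv m]
  have hmnat : m = ((m.toNat : ℕ) : ℤ) := by omega
  have hzpow : (2 * F) ^ m = (2 * F) ^ (m.toNat) := by
    rw [← zpow_natCast, Int.toNat_of_nonneg hm0.le]
  by_cases hmd : 0 ≤ m + d
  · set k : ℕ := (m + d).toNat with hk
    have hkz : m + d = (k : ℤ) := by omega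
    have hcoe : (HahnSeries.ofPowerSeries ℤ ℂ p⁻¹).coeff (m + d) = coeff k p⁻¹ := by
      rw [hkz]
      exact HahnSeries.ofPowerSeries_apply_coeff p⁻¹ k
    rw [hcoe]
    have hkle : k ≤ m.toNat + e := by omega
    have h1 : ‖coeff k p⁻¹‖ ≤ r * F ^ k * k ! := hq k
    have h2 : (k ! : ℝ) ≤ ((m.toNat + e)! : ℝ) := by exact_mod_cast Nat.factorial_le hkle
    have h3 : ((m.toNat + e)! : ℝ) ≤ 2 ^ (m.toNat + e) * (m.toNat)! * e ! :=
      myFactBound m.toNat e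
    have h4 : F ^ k ≤ F ^ (m.toNat + e) := pow_le_pow_right₀ hF1 hkle
    calc ‖coeff k p⁻¹‖ ≤ r * F ^ k * k ! := h1
      _ ≤ r * F ^ (m.toNat + e) * (2 ^ (m.toNat + e) * (m.toNat)! * e !) := by
          apply mul_le_mul (mul_le_mul_of_nonneg_left h4 hrpos.le)
            (le_trans h2 h3) (by positivity) (by positivity)
      _ = (r * (2 * F) ^ e * e !) * ((2 * F) ^ (m.toNat) * (m.toNat)!) := by
          rw [pow_add, pow_add, mul_pow, mul_pow]; ring
      _ = r * (2 * F) ^ e * e ! * (2 * F) ^ m * (m.toNat)! := by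
          rw [hzpow]; ring
  · have hzero : (HahnSeries.ofPowerSeries ℤ ℂ p⁻¹).coeff (m + d) = 0 := by
      rw [HahnSeries.ofPowerSeries_apply, HahnSeries.embDomain_of_notMem_range]
      simp only [Set.mem_range, RelEmbedding.coe_mk, Function.Embedding.coeFn_mk]
      rintro ⟨i, hi⟩
      simp only [Nat.castOrderEmbedding_apply] at hi
      omega
    rw [hzero]
    simp only [norm_zero]
    positivity
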